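/- Consider the 3-qubit (6×6 block) matrices A = CNOT(1,2)(D^{l₀}) and B = CNOT(3,1)(D^{l₁}) for integers l₀, l₁. Their product A·B has Z-block equal to [[1,0,D^{-l₁}],[D^{-l₀},1,D^{-(l₀+l₁)}],[0,0,1]] and X-block equal to [[1,D^{l₀},0],[0,1,0],[D^{l₁},0,1]]. Consequently, if l₀ and l₁ have the same sign then |deg|(A·B) = |l₀+l₁|, and if they have opposite signs then |deg|(A·B) = max(|l₀|,|l₁|). -/

import Mathlib

open LaurentPolynomial Matrix
open scoped Classical

abbrev R2 := LaurentPolynomial (ZMod 2)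

noncomputable def absDeg (b : R2) : ℕ :=
  (max ((b.coeff.support.max).getD 0) |(b.coeff.support.min).getD 0|).toNat

noncomputable def matAbsDeg {m n : Type*} [Fintype m] [Fintype n]
    (B : Matrix m n R2) : ℕ :=
  (Finset.univ.filter fun p : m × n => B p.1 p.2 ≠ 0).sup
    fun p => absDeg (B p.1 p.2)

/-- `CNOT(i,j)(D^l)` on three qubits, acting on row vectors `(z₁,z₂,z₃|x₁,x₂,x₃)`:
block-diagonal with Z-part `I₃ + D^{-l}E_{ji}` and X-part `I₃ + D^l E_{ij}`. -/
noncomputable def cnot3 (i j : Fin 3) (l : ℤ) :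
    Matrix (Fin 3 ⊕ Fin 3) (Fin 3 ⊕ Fin 3) R2 :=
  Matrix.fromBlocks (1 + (T (-l) : R2) • Matrix.single j i (1 : R2)) 0 0
    (1 + (T l : R2) • Matrix.single i j (1 : R2))

lemma T_ne_zero' (n : ℤ) : (T n : R2) ≠ 0 := by
  intro h
  have hs : (T n : R2).coeff.support = {n} := Finsupp.support_single_ne_zero n one_ne_zero
  rw [h] at hs
  exact Finset.singleton_ne_empty n hs.symm

lemma absDeg_T (n : ℤ) : absDeg (T n) = n.natAbs := by
  have hs : (T n : R2).coeff.support = {n} := Finsupp.support_single_ne_zero n one_ne_zero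
  rw [absDeg, hs, Finset.max_singleton, Finset.min_singleton]
  show (max ((Option.some n).getD 0) |(Option.some n).getD 0|).toNat = n.natAbs
  rw [Option.getD_some, max_eq_right (le_abs_self n)]
  rcases abs_cases n with ⟨h1,_⟩|⟨h1,_⟩ <;> rw [h1] <;> omega

lemma absDeg_one : absDeg (1 : R2) = 0 := by
  simpa using absDeg_T 0

lemma absDeg_zero : absDeg (0 : R2) = 0 := by
  rw [absDeg]
  show (max ((⊥ : WithBot ℤ).getD 0) |(⊤ : WithTop ℤ).getD 0|).toNat = 0
  rfl


lemma zblock_eq (l₀ l₁ : ℤ) :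
    ((1 + (T (-l₀) : R2) • Matrix.single (1:Fin 3) 0 (1 : R2)) *
     (1 + (T (-l₁) : R2) • Matrix.single (0:Fin 3) 2 (1 : R2)))
    = !![1, 0, T (-l₁); T (-l₀), 1, T (-(l₀ + l₁)); 0, 0, 1] := by
  rw [mul_add, mul_one, add_mul, one_mul, Matrix.smul_mul, Matrix.mul_smul,
    Matrix.single_mul_single_same, smul_smul, ← T_add]
  ext i j
  fin_cases i <;> fin_cases j <;>
    simp [Matrix.single, Matrix.one_apply, Matrix.add_apply] <;> ring_nf

lemma xblock_eq (l₀ l₁ : ℤ) :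
    ((1 + (T l₀ : R2) • Matrix.single (0:Fin 3) 1 (1 : R2)) *
     (1 + (T l₁ : R2) • Matrix.single (2:Fin 3) 0 (1 : R2)))
    = !![1, T l₀, 0; 0, 1, 0; T l₁, 0, 1] := by
  rw [mul_add, mul_one, add_mul, one_mul, Matrix.smul_mul, Matrix.mul_smul,
    show (single (0:Fin 3) (1:Fin 3) (1:R2)) * single (2:Fin 3) (0:Fin 3) (1:R2) = 0 from
      by simp,
    smul_zero, smul_zero, add_zero]
  ext i j
  fin_cases i <;> fin_cases j <;>
    simp [Matrix.single, Matrix.one_apply, Matrix.add_apply]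

lemma prod_eq (l₀ l₁ : ℤ) :
    cnot3 0 1 l₀ * cnot3 2 0 l₁ =
      Matrix.fromBlocks
        !![1, 0, T (-l₁); T (-l₀), 1, T (-(l₀ + l₁)); 0, 0, 1] 0 0
        !![1, T l₀, 0; 0, 1, 0; T l₁, 0, 1] := by
  rw [cnot3, cnot3, Matrix.fromBlocks_multiply]
  simp only [Matrix.mul_zero, Matrix.zero_mul, add_zero, zero_add]
  rw [zblock_eq, xblock_eq]

set_option maxHeartbeats 2000000 in
lemma matAbsDeg_explicit (l₀ l₁ : ℤ) :
    matAbsDeg (Matrix.fromBlocks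
        !![1, 0, T (-l₁); T (-l₀), 1, T (-(l₀ + l₁)); 0, 0, 1] 0 0
        !![1, T l₀, 0; 0, 1, 0; T l₁, 0, 1]) =
      max (l₀ + l₁).natAbs (max l₀.natAbs l₁.natAbs) := by
  set M := Matrix.fromBlocks
        !![(1:R2), 0, T (-l₁); T (-l₀), 1, T (-(l₀ + l₁)); 0, 0, 1] 0 0
        !![1, T l₀, 0; 0, 1, 0; T l₁, 0, 1] with hM
  have key : ∀ (a b : Fin 3 ⊕ Fin 3) (n : ℤ), M a b = T n →
      n.natAbs ≤ matAbsDeg M := by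
    intro a b n h
    have hmem : (a, b) ∈ Finset.univ.filter
        fun p : (Fin 3 ⊕ Fin 3) × (Fin 3 ⊕ Fin 3) => M p.1 p.2 ≠ 0 :=
      Finset.mem_filter.mpr ⟨Finset.mem_univ _, by rw [h]; exact T_ne_zero' n⟩
    have := Finset.le_sup (f := fun p : (Fin 3 ⊕ Fin 3) × (Fin 3 ⊕ Fin 3) =>
      absDeg (M p.1 p.2)) hmem
    simpa [matAbsDeg, h, absDeg_T] using this
  apply le_antisymm
  · apply Finset.sup_le
    rintro ⟨a, b⟩ _
    rcases a with i | i <;> rcases b with j | j <;> fin_cases i <;> fin_cases j <;>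
      simp [hM, absDeg_T, absDeg_one, absDeg_zero] <;> omega
  · have h1 := key (Sum.inl 1) (Sum.inl 0) (-l₀) (by simp [hM])
    have h2 := key (Sum.inl 0) (Sum.inl 2) (-l₁) (by simp [hM])
    have h3 := key (Sum.inl 1) (Sum.inl 2) (-(l₀ + l₁)) (by simp [hM])
    simp only [Int.natAbs_neg] at h1 h2 h3
    omega

/-- The product `CNOT(1,2)(D^{l₀}) · CNOT(3,1)(D^{l₁})` has the stated Z- and
X-blocks, and its absolute degree is `|l₀+l₁|` when `l₀, l₁` have the same sign
and `max(|l₀|,|l₁|)` when they have opposite signs. -/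
theorem cnot3_product_blocks_and_absDeg (l₀ l₁ : ℤ) :
    (cnot3 0 1 l₀ * cnot3 2 0 l₁ =
      Matrix.fromBlocks
        !![1, 0, T (-l₁); T (-l₀), 1, T (-(l₀ + l₁)); 0, 0, 1] 0 0
        !![1, T l₀, 0; 0, 1, 0; T l₁, 0, 1]) ∧
    ((0 ≤ l₀ ∧ 0 ≤ l₁) ∨ (l₀ ≤ 0 ∧ l₁ ≤ 0) →
      matAbsDeg (cnot3 0 1 l₀ * cnot3 2 0 l₁) = (l₀ + l₁).natAbs) ∧
    ((l₀ ≤ 0 ∧ 0 ≤ l₁) ∨ (l₁ ≤ 0 ∧ 0 ≤ l₀) →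
      matAbsDeg (cnot3 0 1 l₀ * cnot3 2 0 l₁) = max l₀.natAbs l₁.natAbs) := by
  refine ⟨prod_eq l₀ l₁, ?_, ?_⟩ <;> intro h <;>
    rw [prod_eq, matAbsDeg_explicit] <;> omega
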